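/- For z ∈ ℂ with Re z > -1, ∫₀^z log Γ(1+t) dt = (z/2)·log(2π) - z(z+1)/2 + z·log Γ(1+z) - log G(1+z), where G is the Barnes G-function. -/

import Mathlib

open Real

/-- The principal branch of `log Γ(1+z)`, via the Weierstrass product:
`log Γ(1+z) = -γ_E z + Σ_{k≥1} (z/k - log(1+z/k))`. -/
noncomputable def logGammaOnePlus (z : ℂ) : ℂ :=
  -(Real.eulerMascheroniConstant : ℂ) * z +
    ∑' k : ℕ, (z / ((k : ℂ) + 1) - Complex.log (1 + z / ((k : ℂ) + 1)))

/-- The principal branch of `log G(1+z)` for the Barnes G-function, via its Weierstrass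
product: `G(1+z) = (2π)^{z/2} exp(-(z+z²(1+γ_E))/2) Π_{k≥1} (1+z/k)^k exp(z²/(2k) - z)`,
which satisfies `G(1) = 1` and `G(z+1) = Γ(z) G(z)`. -/
noncomputable def logBarnesGOnePlus (z : ℂ) : ℂ :=
  z / 2 * Complex.log (2 * Real.pi) - (z + z ^ 2 * (1 + (Real.eulerMascheroniConstant : ℂ))) / 2 +
    ∑' k : ℕ, (((k : ℂ) + 1) * Complex.log (1 + z / ((k : ℂ) + 1)) +
      z ^ 2 / (2 * ((k : ℂ) + 1)) - z)


open MeasureTheory intervalIntegral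

/-- Second-order bound on the Weierstrass log term. -/
lemma norm_u_le (w : ℂ) (k : ℕ) (h : 2 * ‖w‖ ≤ (k : ℝ) + 1) :
    ‖w / ((k : ℂ) + 1) - Complex.log (1 + w / ((k : ℂ) + 1))‖ ≤ ‖w‖ ^ 2 / ((k : ℝ) + 1) ^ 2 := by
  have hk : (0:ℝ) < (k:ℝ) + 1 := by positivity
  set a : ℂ := w / ((k : ℂ) + 1) with ha
  have hna : ‖a‖ = ‖w‖ / ((k:ℝ) + 1) := by
    rw [ha, norm_div]
    congr 1
    rw [show ((k:ℂ) + 1) = ((((k:ℝ)+1) : ℝ) : ℂ) by push_cast; ring, Complex.norm_real,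
      Real.norm_of_nonneg hk.le]
  have hhalf : ‖a‖ ≤ 1 / 2 := by
    rw [hna, div_le_div_iff₀ hk (by norm_num)]
    linarith
  have h1 : ‖a‖ < 1 := lt_of_le_of_lt hhalf (by norm_num)
  have := Complex.norm_log_one_add_sub_self_le h1
  rw [← norm_neg, neg_sub]
  calc ‖Complex.log (1 + a) - a‖ ≤ ‖a‖ ^ 2 * (1 - ‖a‖)⁻¹ / 2 := this
    _ ≤ ‖a‖ ^ 2 * 2 / 2 := by
        gcongr
        · rw [inv_le_comm₀ (by linarith) (by norm_num)]
          linarith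
    _ = ‖a‖ ^ 2 := by ring
    _ = ‖w‖ ^ 2 / ((k:ℝ) + 1) ^ 2 := by rw [hna, div_pow]

/-- Summability of the Weierstrass log series. -/
lemma summable_u (w : ℂ) :
    Summable (fun k : ℕ => w / ((k : ℂ) + 1) - Complex.log (1 + w / ((k : ℂ) + 1))) := by
  set N : ℕ := ⌈2 * ‖w‖⌉₊ with hN
  rw [← summable_nat_add_iff N]
  have hmaj : Summable (fun n : ℕ => ‖w‖ ^ 2 * (1 / ((n:ℝ) + 1) ^ 2)) := by
    apply Summable.mul_left
    have : Summable (fun n : ℕ => 1 / ((n:ℝ)) ^ 2) :=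
      Real.summable_one_div_nat_pow.mpr one_lt_two
    have := (summable_nat_add_iff 1).mpr this
    exact this.congr (fun n => by push_cast; ring)
  refine Summable.of_norm_bounded hmaj (fun n => ?_)
  have hle : 2 * ‖w‖ ≤ ((n + N : ℕ) : ℝ) + 1 := by
    have : (2 * ‖w‖) ≤ (N : ℝ) := Nat.le_ceil _
    push_cast
    linarith [Nat.cast_nonneg (α := ℝ) n]
  calc ‖w / (((n + N : ℕ) : ℂ) + 1) - Complex.log (1 + w / (((n + N : ℕ) : ℂ) + 1))‖
      ≤ ‖w‖ ^ 2 / (((n + N : ℕ) : ℝ) + 1) ^ 2 := norm_u_le w (n + N) hle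
    _ ≤ ‖w‖ ^ 2 * (1 / ((n:ℝ) + 1) ^ 2) := by
        rw [mul_one_div]
        gcongr
        push_cast
        linarith [Nat.cast_nonneg (α := ℝ) N]

lemma re_pos_aux {z : ℂ} (hz : -1 < z.re) (k : ℕ) {s : ℝ} (h0 : 0 ≤ s) (h1 : s ≤ 1) :
    0 < (1 + (s : ℂ) * z / ((k : ℂ) + 1)).re := by
  have hk : (0:ℝ) < (k:ℝ) + 1 := by positivity
  have he : (1 : ℂ) + (s : ℂ) * z / ((k : ℂ) + 1) = 1 + ((s / ((k:ℝ)+1) : ℝ) : ℂ) * z := by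
    push_cast; ring
  rw [he, Complex.add_re, Complex.one_re, Complex.re_ofReal_mul]
  set t : ℝ := s / ((k:ℝ) + 1) with ht
  have ht0 : 0 ≤ t := div_nonneg h0 hk.le
  have ht1 : t ≤ 1 := by
    rw [ht, div_le_one hk]
    linarith
  nlinarith [mul_nonneg ht0 (by linarith : (0:ℝ) ≤ z.re + 1)]

lemma mem_slit_aux {z : ℂ} (hz : -1 < z.re) (k : ℕ) {s : ℝ} (h0 : 0 ≤ s) (h1 : s ≤ 1) :
    (1 + (s : ℂ) * z / ((k : ℂ) + 1)) ∈ Complex.slitPlane :=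
  Complex.mem_slitPlane_iff.mpr (Or.inl (re_pos_aux hz k h0 h1))

lemma ne_zero_aux {z : ℂ} (hz : -1 < z.re) (k : ℕ) {s : ℝ} (h0 : 0 ≤ s) (h1 : s ≤ 1) :
    (1 + (s : ℂ) * z / ((k : ℂ) + 1)) ≠ 0 :=
  Complex.slitPlane_ne_zero (mem_slit_aux hz k h0 h1)

/-- Continuity of the k-th term on [0,1]. -/
lemma continuousOn_term (z : ℂ) (hz : -1 < z.re) (k : ℕ) :
    ContinuousOn (fun s : ℝ =>
      z * ((s : ℂ) * z / ((k : ℂ) + 1) - Complex.log (1 + (s : ℂ) * z / ((k : ℂ) + 1))))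
      (Set.Icc 0 1) := by
  have hc : ContinuousOn (fun s : ℝ => 1 + (s : ℂ) * z / ((k : ℂ) + 1)) (Set.Icc 0 1) :=
    (continuous_const.add ((Complex.continuous_ofReal.mul continuous_const).div_const _)).continuousOn
  have hlog : ContinuousOn (fun s : ℝ => Complex.log (1 + (s : ℂ) * z / ((k : ℂ) + 1)))
      (Set.Icc 0 1) := hc.clog (fun s hs => mem_slit_aux hz k hs.1 hs.2)
  exact continuousOn_const.mul
    ((((Complex.continuous_ofReal.mul continuous_const).div_const _).continuousOn).sub hlog)

lemma integral_term (z : ℂ) (hz : -1 < z.re) (k : ℕ) :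
    (∫ s in (0:ℝ)..1,
        z * ((s : ℂ) * z / ((k : ℂ) + 1) - Complex.log (1 + (s : ℂ) * z / ((k : ℂ) + 1))))
      = z ^ 2 / (2 * ((k : ℂ) + 1))
        - (((k : ℂ) + 1) + z) * Complex.log (1 + z / ((k : ℂ) + 1)) + z := by
  set c : ℂ := (k : ℂ) + 1 with hcdef
  have hc : c ≠ 0 := by
    rw [hcdef]
    exact Nat.cast_add_one_ne_zero k
  set Φ : ℝ → ℂ := fun s =>
    z ^ 2 * (s : ℂ) ^ 2 / (2 * c)
      - c * ((1 + (s : ℂ) * z / c) * Complex.log (1 + (s : ℂ) * z / c) - (s : ℂ) * z / c)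
    with hΦdef
  have hderiv : ∀ s ∈ Set.uIcc (0:ℝ) 1, HasDerivAt Φ
      (z * ((s : ℂ) * z / c - Complex.log (1 + (s : ℂ) * z / c))) s := by
    intro s hs
    rw [Set.uIcc_of_le zero_le_one] at hs
    have hmem := mem_slit_aux hz k hs.1 hs.2
    have hne := ne_zero_aux hz k hs.1 hs.2
    set w : ℂ := (s : ℂ) with hw
    have hid : HasDerivAt (fun v : ℂ => v * z / c) (z / c) w := by
      simpa using ((hasDerivAt_id w).mul_const z).div_const c
    have hinner : HasDerivAt (fun v : ℂ => 1 + v * z / c) (z / c) w := hid.const_add 1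
    have hlog : HasDerivAt (fun v : ℂ => Complex.log (1 + v * z / c))
        ((1 + w * z / c)⁻¹ * (z / c)) w :=
      (Complex.hasDerivAt_log (by rw [← hcdef] at hmem; exact hmem)).comp w hinner
    have hmul : HasDerivAt (fun v : ℂ => (1 + v * z / c) * Complex.log (1 + v * z / c))
        (z / c * Complex.log (1 + w * z / c) + (1 + w * z / c) * ((1 + w * z / c)⁻¹ * (z / c)))
        w := hinner.mul hlog
    have hA : HasDerivAt (fun v : ℂ => z ^ 2 * v ^ 2 / (2 * c))
        (z ^ 2 * (2 * w ^ 1) / (2 * c)) w := by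
      simpa using ((hasDerivAt_pow 2 w).const_mul (z ^ 2)).div_const (2 * c)
    have hfull := hA.sub ((hmul.sub hid).const_mul c)
    rw [← hcdef] at hne
    have hcan : (1 + w * z / c) * ((1 + w * z / c)⁻¹ * (z / c)) = z / c := by
      rw [← mul_assoc, mul_inv_cancel₀ hne, one_mul]
    have heq : z ^ 2 * (2 * w ^ 1) / (2 * c)
        - c * ((z / c * Complex.log (1 + w * z / c)
            + (1 + w * z / c) * ((1 + w * z / c)⁻¹ * (z / c))) - z / c)
        = z * (w * z / c - Complex.log (1 + w * z / c)) := by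
      rw [hcan]
      field_simp
      ring
    rw [heq] at hfull
    exact hfull.comp_ofReal
  have hint : IntervalIntegrable
      (fun s : ℝ => z * ((s : ℂ) * z / c - Complex.log (1 + (s : ℂ) * z / c)))
      volume 0 1 := by
    apply ContinuousOn.intervalIntegrable
    rw [Set.uIcc_of_le zero_le_one]
    exact continuousOn_term z hz k
  rw [intervalIntegral.integral_eq_sub_of_hasDerivAt hderiv hint]
  have h1 : Φ 1 = z ^ 2 / (2 * c) - c * ((1 + z / c) * Complex.log (1 + z / c) - z / c) := by
    simp [hΦdef]
  have h0 : Φ 0 = 0 := by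
    simp [hΦdef]
  rw [h1, h0, sub_zero]
  have : c * (1 + z / c) = c + z := by field_simp
  field_simp
  ring

lemma summable_inv_sq : Summable (fun n : ℕ => 1 / ((n : ℝ) + 1) ^ 2) := by
  have : Summable (fun n : ℕ => 1 / ((n:ℝ)) ^ 2) :=
    Real.summable_one_div_nat_pow.mpr one_lt_two
  exact ((summable_nat_add_iff 1).mpr this).congr (fun n => by push_cast; ring)

/-- The summands: index `0` is the Euler–Mascheroni term, `k+1` the `k`-th log term. -/
noncomputable def auxF (z : ℂ) : ℕ → ℝ → ℂ
  | 0 => fun s => z * (-(Real.eulerMascheroniConstant : ℂ) * ((s : ℂ) * z))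
  | (k+1) => fun s =>
      z * ((s : ℂ) * z / ((k : ℂ) + 1) - Complex.log (1 + (s : ℂ) * z / ((k : ℂ) + 1)))

lemma auxF_succ (z : ℂ) (k : ℕ) (s : ℝ) : auxF z (k+1) s =
    z * ((s : ℂ) * z / ((k : ℂ) + 1) - Complex.log (1 + (s : ℂ) * z / ((k : ℂ) + 1))) := rfl

lemma auxF_zero (z : ℂ) (s : ℝ) : auxF z 0 s =
    z * (-(Real.eulerMascheroniConstant : ℂ) * ((s : ℂ) * z)) := rfl

/-- for `Re z > -1`,
`∫₀^z log Γ(1+t) dt = (z/2) log(2π) - z(z+1)/2 + z log Γ(1+z) - log G(1+z)`,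
the integral being taken along the straight path from `0` to `z`. -/
theorem integral_logGamma_eq_barnesG (z : ℂ) (hz : -1 < z.re) :
    (∫ s in (0 : ℝ)..1, z * logGammaOnePlus ((s : ℂ) * z)) =
      z / 2 * Complex.log (2 * Real.pi) - z * (z + 1) / 2 +
        z * logGammaOnePlus z - logBarnesGOnePlus z := by
  set γ : ℂ := (Real.eulerMascheroniConstant : ℂ) with hγ
  set w : ℕ → ℂ := fun k => z ^ 2 / (2 * ((k : ℂ) + 1))
    - (((k : ℂ) + 1) + z) * Complex.log (1 + z / ((k : ℂ) + 1)) + z with hwdef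
  -- pointwise expansion of the integrand
  have key : ∀ s : ℝ, z * logGammaOnePlus ((s : ℂ) * z) = ∑' k, auxF z k s := by
    intro s
    have hsum : Summable (fun k : ℕ => auxF z (k + 1) s) :=
      ((summable_u ((s : ℂ) * z)).mul_left z).congr (fun k => (auxF_succ z k s).symm)
    have hFsum : Summable (fun k : ℕ => auxF z k s) := (summable_nat_add_iff 1).mp hsum
    have e2 : z * (∑' k : ℕ, ((s:ℂ)*z / ((k:ℂ)+1) - Complex.log (1+(s:ℂ)*z/((k:ℂ)+1))))
        = ∑' k, auxF z (k+1) s := by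
      rw [← tsum_mul_left]
      exact tsum_congr (fun k => (auxF_succ z k s).symm)
    rw [logGammaOnePlus, mul_add, e2]
    exact (hFsum.tsum_eq_zero_add).symm
  -- integrability of each term
  have hFint : ∀ k : ℕ, IntegrableOn (auxF z k) (Set.Ioc 0 1) volume := by
    intro k
    refine (ContinuousOn.integrableOn_Icc ?_).mono_set Set.Ioc_subset_Icc_self
    cases k with
    | zero =>
        exact (continuous_const.mul
          (continuous_const.mul (Complex.continuous_ofReal.mul continuous_const))).continuousOn
    | succ k => exact continuousOn_term z hz k
  -- summability of the integrals of norms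
  set N : ℕ := ⌈2 * ‖z‖⌉₊ with hN
  have hbound : ∀ (m : ℕ) (C : ℝ), (∀ s ∈ Set.Ioc (0:ℝ) 1, ‖auxF z m s‖ ≤ C) →
      (∫ s in Set.Ioc (0:ℝ) 1, ‖auxF z m s‖) ≤ C := by
    intro m C hC
    have h1 : (∫ s in Set.Ioc (0:ℝ) 1, ‖auxF z m s‖) ≤ ∫ _ in Set.Ioc (0:ℝ) 1, C :=
      setIntegral_mono_on (hFint m).norm
        (integrableOn_const (by simp)) measurableSet_Ioc hC
    simpa [Real.volume_Ioc] using h1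
  have hsumnorm : Summable (fun k => ∫ s in Set.Ioc (0:ℝ) 1, ‖auxF z k s‖) := by
    rw [← summable_nat_add_iff (N + 1)]
    refine Summable.of_nonneg_of_le
      (fun n => integral_nonneg (fun s => norm_nonneg _))
      (fun n => hbound _ (‖z‖ * ‖z‖ ^ 2 * (1 / ((n : ℝ) + 1) ^ 2)) ?_)
      (summable_inv_sq.mul_left (‖z‖ * ‖z‖ ^ 2))
    intro s hs
    have hs0 : (0:ℝ) ≤ s := hs.1.le
    have hs1 : s ≤ 1 := hs.2
    have hnsz : ‖(s : ℂ) * z‖ ≤ ‖z‖ := by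
      rw [norm_mul, Complex.norm_real, Real.norm_of_nonneg hs0]
      nlinarith [norm_nonneg z]
    have hle : 2 * ‖(s : ℂ) * z‖ ≤ ((n + N : ℕ) : ℝ) + 1 := by
      have h2 : 2 * ‖z‖ ≤ (N : ℝ) := Nat.le_ceil _
      push_cast
      nlinarith [Nat.cast_nonneg (α := ℝ) n]
    show ‖auxF z (n + N + 1) s‖ ≤ _
    have : auxF z (n + N + 1) s = z * ((s : ℂ) * z / (((n + N : ℕ) : ℂ) + 1)
        - Complex.log (1 + (s : ℂ) * z / (((n + N : ℕ) : ℂ) + 1))) := by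
      simp [auxF]
    rw [this, norm_mul]
    calc ‖z‖ * ‖(s : ℂ) * z / (((n + N : ℕ) : ℂ) + 1)
          - Complex.log (1 + (s : ℂ) * z / (((n + N : ℕ) : ℂ) + 1))‖
        ≤ ‖z‖ * (‖(s : ℂ) * z‖ ^ 2 / (((n + N : ℕ) : ℝ) + 1) ^ 2) := by
          gcongr
          exact norm_u_le _ _ hle
      _ ≤ ‖z‖ * (‖z‖ ^ 2 / ((n : ℝ) + 1) ^ 2) := by
          refine mul_le_mul_of_nonneg_left ?_ (norm_nonneg z)
          refine div_le_div₀ (by positivity) (by gcongr) (by positivity) ?_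
          gcongr
          · push_cast; linarith [Nat.cast_nonneg (α := ℝ) N]
      _ = ‖z‖ * ‖z‖ ^ 2 * (1 / ((n : ℝ) + 1) ^ 2) := by ring
  have hS : Summable (fun k => ∫ s in Set.Ioc (0:ℝ) 1, auxF z k s) :=
    Summable.of_norm_bounded hsumnorm (fun k => norm_integral_le_integral_norm _)
  -- values of the term integrals
  have I0 : (∫ s in Set.Ioc (0:ℝ) 1, auxF z 0 s) = -γ * z ^ 2 / 2 := by
    rw [← intervalIntegral.integral_of_le zero_le_one]
    have : ∀ s : ℝ, auxF z 0 s = (-γ * z ^ 2) * (s : ℂ) := fun s => by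
      simp [auxF]; ring
    simp_rw [this]
    rw [intervalIntegral.integral_const_mul, intervalIntegral.integral_ofReal, integral_id]
    norm_num
    ring
  have Ik : ∀ k : ℕ, (∫ s in Set.Ioc (0:ℝ) 1, auxF z (k+1) s) = w k := by
    intro k
    rw [← intervalIntegral.integral_of_le zero_le_one]
    exact integral_term z hz k
  have hw : Summable w := ((summable_nat_add_iff 1).mpr hS).congr Ik
  -- LHS computation
  have LHS : (∫ s in (0 : ℝ)..1, z * logGammaOnePlus ((s : ℂ) * z))
      = -γ * z ^ 2 / 2 + ∑' k, w k := by
    calc (∫ s in (0 : ℝ)..1, z * logGammaOnePlus ((s : ℂ) * z))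
        = ∫ s in (0:ℝ)..1, ∑' k, auxF z k s :=
          intervalIntegral.integral_congr (fun s _ => key s)
      _ = ∫ s in Set.Ioc (0:ℝ) 1, ∑' k, auxF z k s :=
          intervalIntegral.integral_of_le zero_le_one
      _ = ∑' k, ∫ s in Set.Ioc (0:ℝ) 1, auxF z k s :=
          (integral_tsum_of_summable_integral_norm hFint hsumnorm).symm
      _ = (∫ s in Set.Ioc (0:ℝ) 1, auxF z 0 s)
          + ∑' k, ∫ s in Set.Ioc (0:ℝ) 1, auxF z (k+1) s := hS.tsum_eq_zero_add
      _ = -γ * z ^ 2 / 2 + ∑' k, w k := by rw [I0]; exact congrArg _ (tsum_congr Ik)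
  -- RHS : rewrite the Barnes sum
  have hu : Summable (fun k : ℕ => z / ((k : ℂ) + 1) - Complex.log (1 + z / ((k : ℂ) + 1))) :=
    summable_u z
  have hbar : (∑' k : ℕ, (((k : ℂ) + 1) * Complex.log (1 + z / ((k : ℂ) + 1)) +
      z ^ 2 / (2 * ((k : ℂ) + 1)) - z))
      = z * (∑' k : ℕ, (z / ((k : ℂ) + 1) - Complex.log (1 + z / ((k : ℂ) + 1)))) - ∑' k, w k := by
    have hv : ∀ k : ℕ, (((k : ℂ) + 1) * Complex.log (1 + z / ((k : ℂ) + 1)) +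
        z ^ 2 / (2 * ((k : ℂ) + 1)) - z)
        = z * (z / ((k : ℂ) + 1) - Complex.log (1 + z / ((k : ℂ) + 1))) - w k := by
      intro k
      have hk : ((k : ℂ) + 1) ≠ 0 := Nat.cast_add_one_ne_zero k
      rw [hwdef]
      field_simp
      ring
    rw [tsum_congr hv, Summable.tsum_sub (hu.mul_left z) hw, tsum_mul_left]
  rw [LHS, logGammaOnePlus, logBarnesGOnePlus, hbar, ← hγ]
  ring
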